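/- The boundary operator ∂ on the cellular chain complex C_*(P_n) of the permutahedron, given on an ordered partition ψ = [ψ₁|…|ψ_d] by ∂[ψ₁|…|ψ_d] = Σ_{1≤k≤d, ∅ ≠ M ⊊ ψ_k} (−1)^{m₁+…+m_{k−1}+(k−1)+#M} (−1)^{σ_M} [ψ₁|…|ψ_{k−1}|M|ψ_k∖M|ψ_{k+1}|…|ψ_d], satisfies ∂² = 0. Here m_i = #ψ_i and σ_M is the sign of the unshuffle permutation taking ψ_k (in increasing order) to the concatenation [M | ψ_k∖M] (each in increasing order). -/

import Mathlib

open Finset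

noncomputable section

variable (K : Type*) [Field K] [CharZero K] (n : ℕ)

/-- Ordered partitions of `{1,…,n}`, encoded as lists of nonempty pairwise disjoint
subsets of `Fin n` covering everything; a partition with `d` parts spans the cellular
chain complex `C_*(P_n)` of the permutahedron in degree `-(n-d)`. -/
def IsOP (l : List (Finset (Fin n))) : Prop :=
  (∀ s ∈ l, s ≠ ∅) ∧ l.Pairwise Disjoint ∧ ∀ x : Fin n, ∃ s ∈ l, x ∈ s

/-- The cellular boundary operator of the permutahedron on the free module spanned by
(lists of subsets encoding) ordered partitions:
`∂[ψ₁|…|ψ_d] = Σ_{k, ∅≠M⊊ψ_k} (-1)^{m₁+…+m_{k-1}+(k-1)+#M} (-1)^{σ_M}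
[ψ₁|…|M|ψ_k∖M|…|ψ_d]`, where `σ_M` is the unshuffle sign, realized as the parity of the
number of pairs `(a, b)` with `a ∈ M`, `b ∈ ψ_k ∖ M`, `b < a`. -/
def permBd : (List (Finset (Fin n)) →₀ K) →ₗ[K] (List (Finset (Fin n)) →₀ K) :=
  Finsupp.lsum K fun l =>
    ∑ j ∈ Finset.range l.length,
      ∑ M ∈ (l.getD j ∅).powerset.filter (fun M => M ≠ ∅ ∧ M ≠ l.getD j ∅),
        ((-1 : K) ^ (((l.take j).map Finset.card).sum + j + M.card +
            ∑ a ∈ M, (((l.getD j ∅) \ M).filter (· < a)).card)) •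
          Finsupp.lsingle (l.take j ++ [M, (l.getD j ∅) \ M] ++ l.drop (j + 1))

set_option linter.unusedSectionVars false

/-- basic list lemmas -/
lemma mid_take (a : List (Finset (Fin n))) (s : Finset (Fin n)) (b : List (Finset (Fin n))) :
    (a ++ s :: b).take a.length = a := List.take_left

lemma mid_drop (a : List (Finset (Fin n))) (s : Finset (Fin n)) (b : List (Finset (Fin n))) :
    (a ++ s :: b).drop (a.length + 1) = b := by
  have h : a ++ s :: b = (a ++ [s]) ++ b := by simp
  rw [h, show a.length + 1 = (a ++ [s]).length by simp, List.drop_left]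

lemma mid_getD (a : List (Finset (Fin n))) (s : Finset (Fin n)) (b : List (Finset (Fin n))) :
    (a ++ s :: b).getD a.length ∅ = s := by
  rw [List.getD_append_right _ _ _ _ le_rfl]
  simp

def spl (l : List (Finset (Fin n))) (j : ℕ) (M : Finset (Fin n)) : List (Finset (Fin n)) :=
  l.take j ++ [M, l.getD j ∅ \ M] ++ l.drop (j + 1)

def iv (M T : Finset (Fin n)) : ℕ := ∑ a ∈ M, (T.filter (· < a)).card

def ex (l : List (Finset (Fin n))) (j : ℕ) (M : Finset (Fin n)) : ℕ :=
  ((l.take j).map Finset.card).sum + j + M.card + iv n M (l.getD j ∅ \ M)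

def Valid (l : List (Finset (Fin n))) (j : ℕ) (M : Finset (Fin n)) : Prop :=
  j < l.length ∧ M ⊆ l.getD j ∅ ∧ M ≠ ∅ ∧ M ≠ l.getD j ∅

instance (l : List (Finset (Fin n))) (j : ℕ) (M : Finset (Fin n)) :
    Decidable (Valid n l j M) := by unfold Valid; infer_instance

lemma spl_eq (a : List (Finset (Fin n))) (s : Finset (Fin n)) (b : List (Finset (Fin n)))
    (M : Finset (Fin n)) :
    spl n (a ++ s :: b) a.length M = a ++ M :: (s \ M) :: b := by
  unfold spl
  rw [mid_take, mid_drop, mid_getD]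
  simp

lemma ex_eq (a : List (Finset (Fin n))) (s : Finset (Fin n)) (b : List (Finset (Fin n)))
    (M : Finset (Fin n)) :
    ex n (a ++ s :: b) a.length M
      = (a.map Finset.card).sum + a.length + M.card + iv n M (s \ M) := by
  unfold ex
  rw [mid_take, mid_getD]

lemma spl_length (l : List (Finset (Fin n))) (j : ℕ) (M : Finset (Fin n)) (h : j < l.length) :
    (spl n l j M).length = l.length + 1 := by
  unfold spl
  simp [List.length_take, List.length_drop]
  omega

lemma decompE (l : List (Finset (Fin n))) (j : ℕ) (h : j < l.length) :
    ∃ a S b, l = a ++ S :: b ∧ a.length = j ∧ l.getD j ∅ = S := by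
  refine ⟨l.take j, l.getD j ∅, l.drop (j + 1), ?_, ?_, rfl⟩
  · conv_lhs => rw [← List.take_append_drop j l]
    rw [List.drop_eq_getElem_cons h, List.getD_eq_getElem _ _ h]
  · simp [List.length_take]
    omega

lemma decomp2E (l : List (Finset (Fin n))) (p q : ℕ) (hpq : p < q) (hq : q < l.length) :
    ∃ a S b T c, l = a ++ S :: (b ++ T :: c) ∧ a.length = p ∧ a.length + 1 + b.length = q ∧
      l.getD p ∅ = S ∧ l.getD q ∅ = T := by
  obtain ⟨a0, T, c, hl, ha0, hT⟩ := decompE n l q hq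
  have hp0 : p < a0.length := by omega
  obtain ⟨a, S, b, hl2, ha, hS⟩ := decompE n a0 p hp0
  have hlen : a0.length = a.length + 1 + b.length := by rw [hl2]; simp; omega
  refine ⟨a, S, b, T, c, ?_, ha, by omega, ?_, hT⟩
  · rw [hl, hl2]; simp
  · rw [hl, List.getD_append _ _ _ _ hp0, hS]

lemma spl_getD_self (l : List (Finset (Fin n))) (j : ℕ) (M : Finset (Fin n))
    (h : j < l.length) : (spl n l j M).getD j ∅ = M := by
  obtain ⟨a, S, b, hl, ha, hS⟩ := decompE n l j h
  subst ha
  rw [hl, spl_eq, mid_getD]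

lemma spl_getD_succ (l : List (Finset (Fin n))) (j : ℕ) (M : Finset (Fin n))
    (h : j < l.length) : (spl n l j M).getD (j + 1) ∅ = l.getD j ∅ \ M := by
  obtain ⟨a, S, b, hl, ha, hS⟩ := decompE n l j h
  subst ha
  rw [hS]
  rw [show spl n l a.length M = a ++ M :: (S \ M) :: b by rw [hl, spl_eq]]
  rw [show a ++ M :: (S \ M) :: b = (a ++ [M]) ++ (S \ M) :: b by simp,
    show a.length + 1 = (a ++ [M]).length by simp, mid_getD]

lemma iv_union_left (A B T : Finset (Fin n)) (h : Disjoint A B) :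
    iv n (A ∪ B) T = iv n A T + iv n B T := Finset.sum_union h

lemma iv_union_right (M A B : Finset (Fin n)) (h : Disjoint A B) :
    iv n M (A ∪ B) = iv n M A + iv n M B := by
  unfold iv
  rw [← Finset.sum_add_distrib]
  refine Finset.sum_congr rfl fun a _ => ?_
  rw [Finset.filter_union, Finset.card_union_of_disjoint
    (h.mono (Finset.filter_subset _ _) (Finset.filter_subset _ _))]

lemma same_part (a b : List (Finset (Fin n))) (S M A : Finset (Fin n))
    (hAM : A ⊆ M) (hMS : M ⊆ S) (hA : A ≠ ∅) (hAne : A ≠ M) (hMne : M ≠ S) :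
    Valid n (a ++ S :: b) a.length M ∧
    Valid n (spl n (a ++ S :: b) a.length M) a.length A ∧
    Valid n (a ++ S :: b) a.length A ∧
    Valid n (spl n (a ++ S :: b) a.length A) (a.length + 1) (M \ A) ∧
    spl n (spl n (a ++ S :: b) a.length M) a.length A
      = spl n (spl n (a ++ S :: b) a.length A) (a.length + 1) (M \ A) ∧
    ex n (a ++ S :: b) a.length A + ex n (spl n (a ++ S :: b) a.length A) (a.length + 1) (M \ A)
      = ex n (a ++ S :: b) a.length M + ex n (spl n (a ++ S :: b) a.length M) a.length A + 1 := by
  have hM : M ≠ ∅ := by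
    intro h
    exact hA (Finset.subset_empty.mp (h ▸ hAM))
  have hAS : A ⊆ S := hAM.trans hMS
  have hASne : A ≠ S := by
    intro h
    exact hMne (Finset.Subset.antisymm hMS (h ▸ hAM))
  have hMA : M \ A ≠ ∅ := by
    intro h
    exact hAne (Finset.Subset.antisymm hAM (Finset.sdiff_eq_empty_iff_subset.mp h))
  have hMAS : M \ A ⊆ S \ A := Finset.sdiff_subset_sdiff hMS Finset.Subset.rfl
  have hMASne : M \ A ≠ S \ A := by
    intro h
    apply hMne
    apply Finset.Subset.antisymm hMS
    intro x hx
    by_cases hxA : x ∈ A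
    · exact hAM hxA
    · have hx2 : x ∈ S \ A := Finset.mem_sdiff.mpr ⟨hx, hxA⟩
      rw [← h] at hx2
      exact (Finset.mem_sdiff.mp hx2).1
  have hSAM : (S \ A) \ (M \ A) = S \ M := by
    ext x
    simp only [Finset.mem_sdiff]
    constructor
    · rintro ⟨⟨hxS, hxA⟩, h2⟩
      exact ⟨hxS, fun hxM => h2 ⟨hxM, hxA⟩⟩
    · rintro ⟨hxS, hxM⟩
      exact ⟨⟨hxS, fun hxA => hxM (hAM hxA)⟩, fun h4 => hxM h4.1⟩
  have e1 : spl n (a ++ S :: b) a.length M = a ++ M :: (S \ M) :: b := spl_eq n a S b M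
  have e2 : spl n (a ++ M :: (S \ M) :: b) a.length A = a ++ A :: (M \ A) :: (S \ M) :: b :=
    spl_eq n a M ((S \ M) :: b) A
  have e3 : spl n (a ++ S :: b) a.length A = a ++ A :: (S \ A) :: b := spl_eq n a S b A
  have h5 : a ++ A :: (S \ A) :: b = (a ++ [A]) ++ (S \ A) :: b := by simp
  have h6 : a.length + 1 = (a ++ [A]).length := by simp
  have e4 : spl n (a ++ A :: (S \ A) :: b) (a.length + 1) (M \ A)
      = a ++ A :: (M \ A) :: (S \ M) :: b := by
    rw [h5, h6, spl_eq, hSAM]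
    simp
  have len1 : a.length < (a ++ S :: b).length := by simp
  refine ⟨⟨len1, ?_, hM, ?_⟩, ?_, ⟨len1, ?_, hA, ?_⟩, ?_, ?_, ?_⟩
  · rw [mid_getD]; exact hMS
  · rw [mid_getD]; exact hMne
  · rw [e1]
    refine ⟨by simp, ?_, hA, ?_⟩
    · rw [mid_getD]; exact hAM
    · rw [mid_getD]; exact hAne
  · rw [mid_getD]; exact hAS
  · rw [mid_getD]; exact hASne
  · rw [e3]
    refine ⟨by simp, ?_, hMA, ?_⟩
    · rw [h5, h6, mid_getD]; exact hMAS
    · rw [h5, h6, mid_getD]; exact hMASne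
  · rw [e1, e2, e3, e4]
  · -- exponent identity
    have x1 : ex n (a ++ S :: b) a.length M
        = (a.map Finset.card).sum + a.length + M.card + iv n M (S \ M) := ex_eq n a S b M
    have x2 : ex n (spl n (a ++ S :: b) a.length M) a.length A
        = (a.map Finset.card).sum + a.length + A.card + iv n A (M \ A) := by
      rw [e1]
      exact ex_eq n a M ((S \ M) :: b) A
    have x3 : ex n (a ++ S :: b) a.length A
        = (a.map Finset.card).sum + a.length + A.card + iv n A (S \ A) := ex_eq n a S b A
    have x4 : ex n (spl n (a ++ S :: b) a.length A) (a.length + 1) (M \ A)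
        = ((a ++ [A]).map Finset.card).sum + (a ++ [A]).length + (M \ A).card
            + iv n (M \ A) (S \ M) := by
      rw [e3, h5, h6, ex_eq, hSAM]
    have hMun : A ∪ (M \ A) = M := Finset.union_sdiff_of_subset hAM
    have d1 : Disjoint A (M \ A) := Finset.disjoint_sdiff
    have ivM : iv n M (S \ M) = iv n A (S \ M) + iv n (M \ A) (S \ M) := by
      have h7 := iv_union_left n A (M \ A) (S \ M) d1
      rw [hMun] at h7
      exact h7
    have hSun : S \ A = (M \ A) ∪ (S \ M) := by
      ext x
      simp only [Finset.mem_sdiff, Finset.mem_union]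
      constructor
      · rintro ⟨hxS, hxA⟩
        by_cases hxM : x ∈ M
        · exact Or.inl ⟨hxM, hxA⟩
        · exact Or.inr ⟨hxS, hxM⟩
      · rintro (⟨hxM, hxA⟩ | ⟨hxS, hxM⟩)
        · exact ⟨hMS hxM, hxA⟩
        · exact ⟨hxS, fun h => hxM (hAM h)⟩
    have d2 : Disjoint (M \ A) (S \ M) := by
      rw [Finset.disjoint_left]
      intro x hx hx'
      exact (Finset.mem_sdiff.mp hx').2 (Finset.mem_sdiff.mp hx).1
    have ivA : iv n A (S \ A) = iv n A (M \ A) + iv n A (S \ M) := by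
      rw [hSun, iv_union_right n A (M \ A) (S \ M) d2]
    have hcard : (M \ A).card + A.card = M.card := Finset.card_sdiff_add_card_eq_card hAM
    rw [x1, x2, x3, x4, ivM, ivA]
    simp only [List.map_append, List.sum_append, List.length_append, List.map_cons,
      List.sum_cons, List.map_nil, List.sum_nil, List.length_cons, List.length_nil]
    omega

lemma distinct (a b c : List (Finset (Fin n))) (S T M N : Finset (Fin n))
    (hM : M ⊆ S) (hN : N ⊆ T) (hM1 : M ≠ ∅) (hM2 : M ≠ S) (hN1 : N ≠ ∅) (hN2 : N ≠ T) :
    Valid n (a ++ S :: (b ++ T :: c)) a.length M ∧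
    Valid n (spl n (a ++ S :: (b ++ T :: c)) a.length M) (a.length + 1 + b.length + 1) N ∧
    Valid n (a ++ S :: (b ++ T :: c)) (a.length + 1 + b.length) N ∧
    Valid n (spl n (a ++ S :: (b ++ T :: c)) (a.length + 1 + b.length) N) a.length M ∧
    spl n (spl n (a ++ S :: (b ++ T :: c)) a.length M) (a.length + 1 + b.length + 1) N
      = spl n (spl n (a ++ S :: (b ++ T :: c)) (a.length + 1 + b.length) N) a.length M ∧
    ex n (a ++ S :: (b ++ T :: c)) a.length M
        + ex n (spl n (a ++ S :: (b ++ T :: c)) a.length M) (a.length + 1 + b.length + 1) N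
      = ex n (a ++ S :: (b ++ T :: c)) (a.length + 1 + b.length) N
        + ex n (spl n (a ++ S :: (b ++ T :: c)) (a.length + 1 + b.length) N) a.length M + 1 := by
  have e1 : spl n (a ++ S :: (b ++ T :: c)) a.length M
      = a ++ M :: (S \ M) :: (b ++ T :: c) := spl_eq n a S (b ++ T :: c) M
  have hr1 : a ++ M :: (S \ M) :: (b ++ T :: c) = (a ++ M :: (S \ M) :: b) ++ T :: c := by simp
  have hi1 : a.length + 1 + b.length + 1 = (a ++ M :: (S \ M) :: b).length := by
    simp only [List.length_append, List.length_cons]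
    omega
  have e2 : spl n (a ++ M :: (S \ M) :: (b ++ T :: c)) (a.length + 1 + b.length + 1) N
      = a ++ M :: (S \ M) :: (b ++ N :: (T \ N) :: c) := by
    rw [hr1, hi1, spl_eq]
    simp
  have hr2 : a ++ S :: (b ++ T :: c) = (a ++ S :: b) ++ T :: c := by simp
  have hi2 : a.length + 1 + b.length = (a ++ S :: b).length := by
    simp only [List.length_append, List.length_cons]
    omega
  have e3 : spl n (a ++ S :: (b ++ T :: c)) (a.length + 1 + b.length) N
      = a ++ S :: (b ++ N :: (T \ N) :: c) := by
    rw [hr2, hi2, spl_eq]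
    simp
  have e4 : spl n (a ++ S :: (b ++ N :: (T \ N) :: c)) a.length M
      = a ++ M :: (S \ M) :: (b ++ N :: (T \ N) :: c) := spl_eq n a S (b ++ N :: (T \ N) :: c) M
  refine ⟨⟨by simp, ?_, hM1, ?_⟩, ?_, ?_, ?_, ?_, ?_⟩
  · rw [mid_getD]; exact hM
  · rw [mid_getD]; exact hM2
  · rw [e1, hr1]
    refine ⟨?_, ?_, hN1, ?_⟩
    · rw [hi1]; simp
    · rw [hi1, mid_getD]; exact hN
    · rw [hi1, mid_getD]; exact hN2
  · rw [hr2]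
    refine ⟨?_, ?_, hN1, ?_⟩
    · rw [hi2]; simp
    · rw [hi2, mid_getD]; exact hN
    · rw [hi2, mid_getD]; exact hN2
  · rw [e3]
    refine ⟨by simp, ?_, hM1, ?_⟩
    · rw [mid_getD]; exact hM
    · rw [mid_getD]; exact hM2
  · rw [e1, e2, e3, e4]
  · have x1 : ex n (a ++ S :: (b ++ T :: c)) a.length M
        = (a.map Finset.card).sum + a.length + M.card + iv n M (S \ M) :=
      ex_eq n a S (b ++ T :: c) M
    have x2 : ex n (spl n (a ++ S :: (b ++ T :: c)) a.length M) (a.length + 1 + b.length + 1) N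
        = ((a ++ M :: (S \ M) :: b).map Finset.card).sum + (a ++ M :: (S \ M) :: b).length
            + N.card + iv n N (T \ N) := by
      rw [e1, hr1, hi1, ex_eq]
    have x3 : ex n (a ++ S :: (b ++ T :: c)) (a.length + 1 + b.length) N
        = ((a ++ S :: b).map Finset.card).sum + (a ++ S :: b).length
            + N.card + iv n N (T \ N) := by
      rw [hr2, hi2, ex_eq]
    have x4 : ex n (spl n (a ++ S :: (b ++ T :: c)) (a.length + 1 + b.length) N) a.length M
        = (a.map Finset.card).sum + a.length + M.card + iv n M (S \ M) := by
      rw [e3]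
      exact ex_eq n a S (b ++ N :: (T \ N) :: c) M
    have hcard : (S \ M).card + M.card = S.card := Finset.card_sdiff_add_card_eq_card hM
    rw [x1, x2, x3, x4]
    simp only [List.map_append, List.sum_append, List.length_append, List.map_cons,
      List.sum_cons, List.map_nil, List.sum_nil, List.length_cons, List.length_nil]
    omega

def g (x : (ℕ × Finset (Fin n)) × (ℕ × Finset (Fin n))) :
    (ℕ × Finset (Fin n)) × (ℕ × Finset (Fin n)) :=
  if x.2.1 < x.1.1 then ((x.2.1, x.2.2), (x.1.1 + 1, x.1.2))
  else if x.2.1 = x.1.1 then ((x.1.1, x.2.2), (x.1.1 + 1, x.1.2 \ x.2.2))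
  else if x.2.1 = x.1.1 + 1 then ((x.1.1, x.1.2 ∪ x.2.2), (x.1.1, x.1.2))
  else ((x.2.1 - 1, x.2.2), (x.1.1, x.1.2))

def Pair (l : List (Finset (Fin n))) (x : (ℕ × Finset (Fin n)) × (ℕ × Finset (Fin n))) : Prop :=
  Valid n l x.1.1 x.1.2 ∧ Valid n (spl n l x.1.1 x.1.2) x.2.1 x.2.2

instance (l : List (Finset (Fin n))) (x : (ℕ × Finset (Fin n)) × (ℕ × Finset (Fin n))) :
    Decidable (Pair n l x) := by unfold Pair; infer_instance

def res (l : List (Finset (Fin n))) (x : (ℕ × Finset (Fin n)) × (ℕ × Finset (Fin n))) :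
    List (Finset (Fin n)) :=
  spl n (spl n l x.1.1 x.1.2) x.2.1 x.2.2

def exx (l : List (Finset (Fin n))) (x : (ℕ × Finset (Fin n)) × (ℕ × Finset (Fin n))) : ℕ :=
  ex n l x.1.1 x.1.2 + ex n (spl n l x.1.1 x.1.2) x.2.1 x.2.2

lemma core (l : List (Finset (Fin n))) (x : (ℕ × Finset (Fin n)) × (ℕ × Finset (Fin n)))
    (h : Pair n l x) :
    Pair n l (g n x) ∧ res n l (g n x) = res n l x ∧ Odd (exx n l (g n x) + exx n l x) := by
  obtain ⟨⟨j, M⟩, ⟨j', M'⟩⟩ := x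
  obtain ⟨h1, h2⟩ := h
  dsimp only at h1 h2
  have hjlen : j < l.length := h1.1
  have hsl : (spl n l j M).length = l.length + 1 := spl_length n l j M hjlen
  rcases lt_trichotomy j' j with hlt | heq | hgt
  · -- j' < j : disjoint parts, second split before first
    have hg : g n ((j, M), (j', M')) = ((j', M'), (j + 1, M)) := by
      simp [g, hlt]
    obtain ⟨a, S, b, T, c, hl, ha, hb, hS, hT⟩ := decomp2E n l j' j hlt hjlen
    subst ha
    subst hb
    have hsplM : spl n l (a.length + 1 + b.length) M = a ++ S :: (b ++ M :: (T \ M) :: c) := by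
      rw [hl, show a ++ S :: (b ++ T :: c) = (a ++ S :: b) ++ T :: c by simp,
        show a.length + 1 + b.length = (a ++ S :: b).length by
          simp only [List.length_append, List.length_cons]; omega, spl_eq]
      simp
    have hM : M ⊆ T := hT ▸ h1.2.1
    have hM2 : M ≠ T := hT ▸ h1.2.2.2
    have hM' : M' ⊆ S := by
      have := h2.2.1
      rwa [hsplM, mid_getD] at this
    have hM'2 : M' ≠ S := by
      have := h2.2.2.2
      rwa [hsplM, mid_getD] at this
    obtain ⟨V1, V2, V3, V4, heq5, hex⟩ :=
      distinct n a b c S T M' M hM' hM h2.2.2.1 hM'2 h1.2.2.1 hM2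
    rw [hg]
    rw [← hl] at V1 V2 V3 V4 heq5 hex
    refine ⟨⟨V1, V2⟩, ?_, ?_⟩
    · simp only [res]
      exact heq5
    · simp only [exx]
      rw [Nat.odd_iff]
      omega
  · -- j' = j : same part, second split refines M
    subst heq
    obtain ⟨a, S, b, hl, ha, hS⟩ := decompE n l j' hjlen
    subst ha
    have hsplM : spl n l a.length M = a ++ M :: (S \ M) :: b := by
      rw [hl, spl_eq]
    have hM : M ⊆ S := hS ▸ h1.2.1
    have hMne : M ≠ S := hS ▸ h1.2.2.2
    have hM' : M' ⊆ M := by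
      have := h2.2.1
      rwa [hsplM, mid_getD] at this
    have hM'ne : M' ≠ M := by
      have := h2.2.2.2
      rwa [hsplM, mid_getD] at this
    have hg : g n ((a.length, M), (a.length, M')) = ((a.length, M'), (a.length + 1, M \ M')) := by
      simp [g]
    obtain ⟨V1, V2, V3, V4, heq5, hex⟩ :=
      same_part n a b S M M' hM' hM h2.2.2.1 hM'ne hMne
    rw [hg]
    rw [← hl] at V1 V2 V3 V4 heq5 hex
    refine ⟨⟨V3, V4⟩, ?_, ?_⟩
    · simp only [res]
      exact heq5.symm
    · simp only [exx]
      rw [Nat.odd_iff]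
      omega
  · rcases Nat.lt_or_ge j' (j + 2) with hj2 | hj2
    · -- j' = j + 1 : same part, second split inside complement
      have hj1 : j' = j + 1 := by omega
      subst hj1
      obtain ⟨a, S, b, hl, ha, hS⟩ := decompE n l j hjlen
      subst ha
      have hsplM : spl n l a.length M = a ++ M :: (S \ M) :: b := by
        rw [hl, spl_eq]
      have hM : M ⊆ S := hS ▸ h1.2.1
      have hMne : M ≠ S := hS ▸ h1.2.2.2
      have hM0 : M ≠ ∅ := h1.2.2.1
      have hrw : a ++ M :: (S \ M) :: b = (a ++ [M]) ++ (S \ M) :: b := by simp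
      have hrwl : a.length + 1 = (a ++ [M]).length := by simp
      have hM' : M' ⊆ S \ M := by
        have := h2.2.1
        rwa [hsplM, hrw, hrwl, mid_getD] at this
      have hM'ne : M' ≠ S \ M := by
        have := h2.2.2.2
        rwa [hsplM, hrw, hrwl, mid_getD] at this
      have hM'0 : M' ≠ ∅ := h2.2.2.1
      have hd : Disjoint M M' := by
        rw [Finset.disjoint_left]
        intro x hx hx'
        exact (Finset.mem_sdiff.mp (hM' hx')).2 hx
      have hMM' : M ≠ M ∪ M' := by
        intro hc
        apply hM'0
        have hsub : M' ⊆ M := by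
          rw [hc]
          exact Finset.subset_union_right
        rw [← Finset.subset_empty]
        intro x hx
        exact absurd (hsub hx) (fun hxM => Finset.disjoint_left.mp hd hxM hx)
      have hMS' : M ∪ M' ⊆ S := Finset.union_subset hM (hM'.trans Finset.sdiff_subset)
      have hMneS : M ∪ M' ≠ S := by
        intro hc
        apply hM'ne
        apply Finset.Subset.antisymm hM'
        intro x hx
        obtain ⟨hxS, hxM⟩ := Finset.mem_sdiff.mp hx
        rcases Finset.mem_union.mp (hc ▸ hxS : x ∈ M ∪ M') with h4 | h4
        · exact absurd h4 hxM
        · exact h4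
      have huni : (M ∪ M') \ M = M' := Finset.union_sdiff_cancel_left hd
      have hg : g n ((a.length, M), (a.length + 1, M')) = ((a.length, M ∪ M'), (a.length, M)) := by
        simp [g]
      obtain ⟨V1, V2, V3, V4, heq5, hex⟩ :=
        same_part n a b S (M ∪ M') M Finset.subset_union_left hMS' hM0 hMM' hMneS
      rw [huni] at V4 heq5 hex
      rw [hg]
      rw [← hl] at V1 V2 V3 V4 heq5 hex
      refine ⟨⟨V1, V2⟩, ?_, ?_⟩
      · simp only [res]
        exact heq5
      · simp only [exx]
        rw [Nat.odd_iff]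
        omega
    · -- j' ≥ j + 2 : disjoint parts, second split after first
      have hj'len : j' - 1 < l.length := by
        have := h2.1
        rw [hsl] at this
        omega
      have hjj' : j < j' - 1 := by omega
      obtain ⟨a, S, b, T, c, hl, ha, hb, hS, hT⟩ := decomp2E n l j (j' - 1) hjj' hj'len
      subst ha
      have hq1 : j' = a.length + 1 + b.length + 1 := by omega
      subst hq1
      have hsplM : spl n l a.length M = a ++ M :: (S \ M) :: (b ++ T :: c) := by
        rw [hl, spl_eq]
      have hrw : a ++ M :: (S \ M) :: (b ++ T :: c) = (a ++ M :: (S \ M) :: b) ++ T :: c := by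
        simp
      have hrwl : a.length + 1 + b.length + 1 = (a ++ M :: (S \ M) :: b).length := by
        simp only [List.length_append, List.length_cons]
        omega
      have hM : M ⊆ S := hS ▸ h1.2.1
      have hMne : M ≠ S := hS ▸ h1.2.2.2
      have hM' : M' ⊆ T := by
        have := h2.2.1
        rwa [hsplM, hrw, hrwl, mid_getD] at this
      have hM'ne : M' ≠ T := by
        have := h2.2.2.2
        rwa [hsplM, hrw, hrwl, mid_getD] at this
      have hg : g n ((a.length, M), (a.length + 1 + b.length + 1, M'))
          = ((a.length + 1 + b.length, M'), (a.length, M)) := by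
        simp only [g]
        rw [if_neg (by omega), if_neg (by omega), if_neg (by omega)]
        simp
      obtain ⟨V1, V2, V3, V4, heq5, hex⟩ :=
        distinct n a b c S T M M' hM hM' h1.2.2.1 hMne h2.2.2.1 hM'ne
      rw [hg]
      rw [← hl] at V1 V2 V3 V4 heq5 hex
      refine ⟨⟨V3, V4⟩, ?_, ?_⟩
      · simp only [res]
        exact heq5.symm
      · simp only [exx]
        rw [Nat.odd_iff]
        omega

lemma g_invol (l : List (Finset (Fin n))) (x : (ℕ × Finset (Fin n)) × (ℕ × Finset (Fin n)))
    (h : Pair n l x) : g n (g n x) = x := by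
  obtain ⟨⟨j, M⟩, ⟨j', M'⟩⟩ := x
  obtain ⟨h1, h2⟩ := h
  dsimp only at h1 h2
  rcases lt_trichotomy j' j with hlt | heq | hgt
  · have hg1 : g n ((j, M), (j', M')) = ((j', M'), (j + 1, M)) := by simp [g, hlt]
    rw [hg1]
    simp only [g]
    rw [if_neg (by omega : ¬ j + 1 < j'), if_neg (by omega : ¬ j + 1 = j'),
      if_neg (by omega : ¬ j + 1 = j' + 1)]
    simp
  · subst heq
    have hsub : M' ⊆ M := by
      have := h2.2.1
      rwa [spl_getD_self n l j' M h1.1] at this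
    have hg1 : g n ((j', M), (j', M')) = ((j', M'), (j' + 1, M \ M')) := by simp [g]
    rw [hg1]
    have hg2 : g n ((j', M'), (j' + 1, M \ M')) = ((j', M' ∪ (M \ M')), (j', M')) := by
      simp [g]
    rw [hg2, Finset.union_sdiff_of_subset hsub]
  · rcases Nat.lt_or_ge j' (j + 2) with hj2 | hj2
    · have hj1 : j' = j + 1 := by omega
      subst hj1
      have hsub : M' ⊆ l.getD j ∅ \ M := by
        have := h2.2.1
        rwa [spl_getD_succ n l j M h1.1] at this
      have hd : Disjoint M M' := by
        rw [Finset.disjoint_left]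
        intro x hx hx'
        exact (Finset.mem_sdiff.mp (hsub hx')).2 hx
      have hg1 : g n ((j, M), (j + 1, M')) = ((j, M ∪ M'), (j, M)) := by simp [g]
      rw [hg1]
      have hg2 : g n ((j, M ∪ M'), (j, M)) = ((j, M), (j + 1, (M ∪ M') \ M)) := by simp [g]
      rw [hg2, Finset.union_sdiff_cancel_left hd]
    · have hg1 : g n ((j, M), (j', M')) = ((j' - 1, M'), (j, M)) := by
        simp only [g]
        rw [if_neg (by omega), if_neg (by omega), if_neg (by omega)]
      rw [hg1]
      have h3 : g n ((j' - 1, M'), (j, M)) = ((j, M), (j' - 1 + 1, M')) := by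
        have hc : j < j' - 1 := by omega
        simp [g, hc]
      rw [h3, show j' - 1 + 1 = j' by omega]

def tf (l : List (Finset (Fin n))) (x : (ℕ × Finset (Fin n)) × (ℕ × Finset (Fin n))) :
    List (Finset (Fin n)) →₀ K :=
  if Pair n l x then ((-1 : K) ^ exx n l x) • Finsupp.single (res n l x) 1 else 0

def gg (l : List (Finset (Fin n))) (x : (ℕ × Finset (Fin n)) × (ℕ × Finset (Fin n))) :
    (ℕ × Finset (Fin n)) × (ℕ × Finset (Fin n)) :=
  if Pair n l x then g n x else x

lemma tf_of_pair (l : List (Finset (Fin n))) (x : (ℕ × Finset (Fin n)) × (ℕ × Finset (Fin n)))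
    (h : Pair n l x) :
    tf K n l x = ((-1 : K) ^ exx n l x) • Finsupp.single (res n l x) 1 := by
  unfold tf
  rw [if_pos h]

lemma tf_of_not (l : List (Finset (Fin n))) (x : (ℕ × Finset (Fin n)) × (ℕ × Finset (Fin n)))
    (h : ¬ Pair n l x) : tf K n l x = 0 := by
  unfold tf
  rw [if_neg h]

lemma neg_one_pow_add_eq_zero {p q : ℕ} (h : Odd (p + q)) :
    ((-1 : K) ^ p + (-1 : K) ^ q) = 0 := by
  rcases Nat.even_or_odd p with hp | hp
  · have hq : Odd q := by
      rw [Nat.odd_iff] at h ⊢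
      rw [Nat.even_iff] at hp
      omega
    rw [hp.neg_one_pow, hq.neg_one_pow]
    ring
  · have hq : Even q := by
      rw [Nat.odd_iff] at h hp
      rw [Nat.even_iff]
      omega
    rw [hp.neg_one_pow, hq.neg_one_pow]
    ring

lemma valid_iff_mem (m : List (Finset (Fin n))) (j : ℕ) (hj : j < m.length)
    (M : Finset (Fin n)) :
    M ∈ (m.getD j ∅).powerset.filter (fun M => M ≠ ∅ ∧ M ≠ m.getD j ∅) ↔ Valid n m j M := by
  simp only [Finset.mem_filter, Finset.mem_powerset, Valid]
  tauto

lemma permBd_single (m : List (Finset (Fin n))) :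
    permBd K n (Finsupp.single m 1) =
      ∑ j ∈ Finset.range m.length,
        ∑ M ∈ (m.getD j ∅).powerset.filter (fun M => M ≠ ∅ ∧ M ≠ m.getD j ∅),
          ((-1 : K) ^ ex n m j M) • Finsupp.single (spl n m j M) 1 := by
  unfold permBd
  rw [Finsupp.lsum_single]
  simp only [LinearMap.coe_sum, Finset.sum_apply, LinearMap.smul_apply,
    Finsupp.lsingle_apply, ex, iv, spl]

lemma bigExpand (l : List (Finset (Fin n))) :
    permBd K n (permBd K n (Finsupp.single l 1)) =
      ∑ x ∈ (Finset.range l.length ×ˢ (Finset.univ : Finset (Fin n)).powerset) ×ˢ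
          (Finset.range (l.length + 1) ×ˢ (Finset.univ : Finset (Fin n)).powerset),
        tf K n l x := by
  rw [Finset.sum_product]
  simp only [Finset.sum_product]
  rw [permBd_single K n l, map_sum]
  refine Finset.sum_congr rfl fun j hj => ?_
  have hj' : j < l.length := Finset.mem_range.mp hj
  rw [map_sum]
  have hsub : (l.getD j ∅).powerset.filter (fun M => M ≠ ∅ ∧ M ≠ l.getD j ∅)
      ⊆ (Finset.univ : Finset (Fin n)).powerset := fun M _ => by
    simp
  rw [← Finset.sum_subset hsub ?hvan]
  case hvan =>
    intro M _ hMnot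
    refine Finset.sum_eq_zero fun j' _ => Finset.sum_eq_zero fun M' _ => ?_
    refine tf_of_not K n l _ fun hp => ?_
    exact hMnot ((valid_iff_mem n l j hj' M).mpr hp.1)
  refine Finset.sum_congr rfl fun M hM => ?_
  have hvM : Valid n l j M := (valid_iff_mem n l j hj' M).mp hM
  rw [map_smul, permBd_single K n (spl n l j M), spl_length n l j M hj']
  rw [Finset.smul_sum]
  refine Finset.sum_congr rfl fun j' hj2 => ?_
  have hj2' : j' < l.length + 1 := Finset.mem_range.mp hj2
  rw [Finset.smul_sum]
  have hj2'' : j' < (spl n l j M).length := by rw [spl_length n l j M hj']; exact hj2'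
  have hsub2 : ((spl n l j M).getD j' ∅).powerset.filter
        (fun M' => M' ≠ ∅ ∧ M' ≠ (spl n l j M).getD j' ∅)
      ⊆ (Finset.univ : Finset (Fin n)).powerset := fun M' _ => by
    simp
  rw [← Finset.sum_subset hsub2 ?hvan2]
  case hvan2 =>
    intro M' _ hM'not
    refine tf_of_not K n l _ fun hp => ?_
    exact hM'not ((valid_iff_mem n (spl n l j M) j' hj2'' M').mpr hp.2)
  refine Finset.sum_congr rfl fun M' hM' => ?_
  have hvM' : Valid n (spl n l j M) j' M' := (valid_iff_mem n (spl n l j M) j' hj2'' M').mp hM'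
  rw [tf_of_pair K n l ((j, M), (j', M')) ⟨hvM, hvM'⟩]
  simp only [exx, res]
  rw [pow_add, mul_smul]

lemma tf_sum_zero (l : List (Finset (Fin n))) :
    ∑ x ∈ (Finset.range l.length ×ˢ (Finset.univ : Finset (Fin n)).powerset) ×ˢ
        (Finset.range (l.length + 1) ×ˢ (Finset.univ : Finset (Fin n)).powerset),
      tf K n l x = 0 := by
  refine Finset.sum_involution (fun x _ => gg n l x) ?_ ?_ ?_ ?_
  · intro x hx
    by_cases hp : Pair n l x
    · obtain ⟨hp', hres, hodd⟩ := core n l x hp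
      unfold gg
      rw [if_pos hp, tf_of_pair K n l x hp, tf_of_pair K n l _ hp', hres, ← add_smul]
      have hodd' : Odd (exx n l x + exx n l (g n x)) := by rwa [Nat.add_comm]
      rw [neg_one_pow_add_eq_zero K hodd', zero_smul]
    · unfold gg
      rw [if_neg hp, tf_of_not K n l x hp, add_zero]
  · intro x hx htf
    have hp : Pair n l x := by
      by_contra hc
      exact htf (tf_of_not K n l x hc)
    unfold gg
    rw [if_pos hp]
    intro hc
    have hc2 : (g n x).2.1 = x.2.1 := by rw [hc]
    unfold g at hc2
    split_ifs at hc2 <;> dsimp only at hc2 <;> omega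
  · intro x hx
    by_cases hp : Pair n l x
    · obtain ⟨hp', _, _⟩ := core n l x hp
      unfold gg
      rw [if_pos hp]
      have hglen : (g n x).1.1 < l.length := hp'.1.1
      have hglen2 : (g n x).2.1 < l.length + 1 := by
        have := hp'.2.1
        rwa [spl_length n l _ _ hp'.1.1] at this
      simp only [Finset.mem_product, Finset.mem_range, Finset.mem_powerset]
      exact ⟨⟨hglen, Finset.subset_univ _⟩, hglen2, Finset.subset_univ _⟩
    · unfold gg
      rw [if_neg hp]
      exact hx
  · intro x hx
    by_cases hp : Pair n l x
    · obtain ⟨hp', _, _⟩ := core n l x hp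
      unfold gg
      rw [if_pos hp, if_pos hp']
      exact g_invol n l x hp
    · unfold gg
      rw [if_neg hp, if_neg hp]


/- STATEMENT 4: the cellular boundary operator of the permutahedron squares to zero on
the span of ordered partitions. -/
theorem stmt4 :
    ∀ l : List (Finset (Fin n)), IsOP n l →
      permBd K n (permBd K n (Finsupp.single l 1)) = 0 := by
  intro l _
  rw [bigExpand K n l]
  exact tf_sum_zero K n l
end
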